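/- arXiv:1910.08981 — 3 statements merged into one kernel-verified Lean document; each statement's English description precedes it below -/
import Mathlib

section
/- Let n be a positive integer, let 0 < α < 1, set ε = 6·(α/6)^{2^{n−1}}, and let s₁ > s₂ > … > s_n > 0 be real numbers. Then there exists a real number u such that ε ≤ {u s_k} ≤ α for every k ∈ {1,…,n}, where {x} denotes the fractional part of x. -/
set_option maxHeartbeats 1000000

lemma key (n : ℕ) : ∀ (α : ℝ), 0 < α → α < 1 → ∀ s : Fin (n+1) → ℝ, (∀ k, 0 < s k) → StrictAnti s →
    ∃ u : ℝ, ∀ k, 6 * (α/6)^(2^n) ≤ Int.fract (u * s k) ∧ Int.fract (u * s k) ≤ α := by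
  induction n with
  | zero =>
    intro α hα0 hα1 s hpos _
    refine ⟨α / s 0, fun k => ?_⟩
    have hk : k = 0 := Fin.fin_one_eq_zero k
    subst hk
    rw [div_mul_cancel₀ _ (hpos 0).ne']
    rw [Int.fract_eq_self.mpr ⟨hα0.le, hα1⟩]
    simp only [pow_zero, pow_one]
    exact ⟨by linarith, le_rfl⟩
  | succ n IH =>
    intro α hα0 hα1 s hpos hanti
    set β : ℝ := α^2/6 with hβ
    have hβ0 : 0 < β := by positivity
    have hβ1 : β < 1 := by nlinarith
    obtain ⟨v, hv⟩ := IH β hβ0 hβ1 (fun k => s k.succ) (fun k => hpos _)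
      (hanti.comp_strictMono Fin.strictMono_succ)
    set ε : ℝ := 6 * (α/6)^(2^(n+1)) with hεdef
    have hεeq : (6:ℝ) * (β/6)^(2^n) = ε := by
      rw [hεdef, show β/6 = (α/6)^2 by rw [hβ]; ring, ← pow_mul,
        show 2*2^n = 2^(n+1) by rw [pow_succ]; ring]
    have hα6 : (0:ℝ) < α/6 := by linarith
    have hεβ : ε ≤ β := by
      have h1 : (α/6)^(2^(n+1)) ≤ (α/6)^2 :=
        pow_le_pow_of_le_one hα6.le (by linarith)
          (by calc 2 = 2^1 := rfl
              _ ≤ 2^(n+1) := Nat.pow_le_pow_right (by norm_num) (by omega))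
      calc ε = 6 * (α/6)^(2^(n+1)) := hεdef
        _ ≤ 6 * (α/6)^2 := by nlinarith
        _ = β := by rw [hβ]; ring
    have hε0 : 0 < ε := by rw [hεdef]; positivity
    set x : ℕ := ⌈2/α⌉₊ with hxdef
    have hx2 : 2 ≤ x := by
      have : (1:ℝ) < 2/α := by rw [lt_div_iff₀ hα0]; linarith
      have := Nat.lt_ceil.mpr (by exact_mod_cast this : ((1:ℕ):ℝ) < 2/α)
      omega
    set M : ℕ := x - 1 with hMdef
    have hM0 : 0 < M := by omega
    have hMx : (M : ℝ) + 1 = x := by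
      rw [hMdef]; push_cast [Nat.cast_sub (by omega : 1 ≤ x)]; ring
    have hxge : (2:ℝ)/α ≤ x := Nat.le_ceil _
    have hxle : (x:ℝ) ≤ 3/α := by
      have h2 := Nat.ceil_lt_add_one (show (0:ℝ) ≤ 2/α by positivity)
      rw [← hxdef] at h2
      have h1 : (1:ℝ) ≤ 1/α := (le_div_iff₀ hα0).mpr (by linarith)
      have h3 : (2:ℝ)/α + 1/α = 3/α := by ring
      linarith
    have hinv : 1/((M:ℝ)+1) ≤ α/2 := by
      rw [hMx, div_le_div_iff₀ (by exact_mod_cast Nat.lt_of_lt_of_le Nat.zero_lt_two hx2 : (0:ℝ) < x) (by norm_num)]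
      have h2 : (2:ℝ) ≤ (x:ℝ)*α := by
        rw [← div_mul_cancel₀ (2:ℝ) hα0.ne']
        exact mul_le_mul_of_nonneg_right hxge hα0.le
      linarith
    have hMβ : ((M:ℝ)+1) * β ≤ α/2 := by
      rw [hMx, hβ]
      calc (x:ℝ) * (α^2/6) ≤ (3/α) * (α^2/6) := by nlinarith
        _ = α/2 := by field_simp; ring
    obtain ⟨j, m, hm0, hmM, hjm⟩ := Real.exists_int_int_abs_mul_sub_le (v * s 0) hM0
    set δ : ℝ := (m:ℝ) * (v * s 0) - j with hδdef
    have hδabs : |δ| ≤ 1/((M:ℝ)+1) := by rw [hδdef]; exact_mod_cast hjm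
    have hδlo : -(1/((M:ℝ)+1)) ≤ δ := neg_le_of_abs_le hδabs
    have hδhi : δ ≤ 1/((M:ℝ)+1) := le_of_abs_le hδabs
    set d : ℝ := if δ < ε then ε - δ else 0 with hddef
    have hd0 : 0 ≤ d := by
      rw [hddef]; split
      · linarith
      · rfl
    have hdle : d ≤ ε + 1/((M:ℝ)+1) := by
      rw [hddef]; split
      · linarith
      · positivity
    have hm1 : (1:ℝ) ≤ (m:ℝ) := by exact_mod_cast hm0
    have hmMr : (m:ℝ) ≤ (M:ℝ) := by exact_mod_cast hmM
    have hεα : ε ≤ α := by nlinarith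
    have hsum : (M:ℝ)*β + (ε + 1/((M:ℝ)+1)) ≤ α := by nlinarith
    refine ⟨(m:ℝ) * v + d / s 0, fun k => ?_⟩
    induction k using Fin.cases with
    | zero =>
      have hs0 : s 0 ≠ 0 := (hpos 0).ne'
      have hmain : ((m:ℝ) * v + d / s 0) * s 0 = (j:ℝ) + (δ + d) := by
        rw [add_mul, div_mul_cancel₀ _ hs0, hδdef]; ring
      rw [hmain, Int.fract_intCast_add]
      by_cases hc : δ < ε
      · rw [hddef, if_pos hc, show δ + (ε - δ) = ε by ring,
          Int.fract_eq_self.mpr ⟨hε0.le, by linarith⟩]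
        exact ⟨le_refl _, hεα⟩
      · push_neg at hc
        rw [hddef, if_neg (not_lt.mpr hc), add_zero,
          Int.fract_eq_self.mpr ⟨by linarith, by linarith⟩]
        constructor <;> linarith
    | succ i =>
      obtain ⟨hf1, hf2⟩ := hv i
      rw [hεeq] at hf1
      set f : ℝ := Int.fract (v * s i.succ) with hfdef
      have hfl : (0:ℝ) ≤ f := Int.fract_nonneg _
      have hsk0 : 0 < s i.succ := hpos _
      have hsks0 : s i.succ ≤ s 0 := (hanti (Fin.succ_pos i)).le
      have hds : d / s 0 * s i.succ ≤ d := by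
        rw [div_mul_eq_mul_div, div_le_iff₀ (hpos 0)]
        exact mul_le_mul_of_nonneg_left hsks0 hd0
      have hds0 : 0 ≤ d / s 0 * s i.succ := mul_nonneg (div_nonneg hd0 (hpos 0).le) hsk0.le
      have hvs : v * s i.succ = (⌊v * s i.succ⌋ : ℝ) + f := (Int.floor_add_fract _).symm
      have hexp : ((m:ℝ) * v + d / s 0) * s i.succ
          = ((m * ⌊v * s i.succ⌋ : ℤ) : ℝ) + ((m:ℝ) * f + d / s 0 * s i.succ) := by
        push_cast
        linear_combination (m:ℝ) * hvs
      have hmf : f ≤ (m:ℝ) * f := by nlinarith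
      have hmfM : (m:ℝ) * f ≤ (M:ℝ) * β :=
        mul_le_mul hmMr hf2 hfl (by exact_mod_cast Nat.zero_le M)
      have ht0 : 0 ≤ (m:ℝ) * f + d / s 0 * s i.succ := by linarith
      have ht1 : (m:ℝ) * f + d / s 0 * s i.succ ≤ α := by linarith
      rw [hexp, Int.fract_intCast_add, Int.fract_eq_self.mpr ⟨ht0, by linarith⟩]
      exact ⟨by linarith, ht1⟩

/-- Lemma 2.5. -/
theorem statement3 (n : ℕ) (hn : 0 < n) (α : ℝ) (hα0 : 0 < α) (hα1 : α < 1)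
    (s : Fin n → ℝ) (hpos : ∀ k, 0 < s k) (hanti : StrictAnti s) :
    ∃ u : ℝ, ∀ k : Fin n,
      6 * (α / 6) ^ (2 ^ (n - 1)) ≤ Int.fract (u * s k) ∧ Int.fract (u * s k) ≤ α := by
  obtain ⟨m, rfl⟩ : ∃ m, n = m + 1 := ⟨n - 1, (Nat.succ_pred_eq_of_pos hn).symm⟩
  simpa using key m α hα0 hα1 s hpos hanti
end

section
/- Let q ≥ 3 and let B be a KT-system for D = {a₁, …, a_r} ⊆ F_q^*. Then for every good family F that is R⁻(B)-similar to P_q, at least r(r−1)/2 + 1 distinct orderings of the functions F_{q,a₁}, …, F_{q,a_r} occur for arbitrarily large x. -/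
open Complex Filter MeasureTheory Asymptotics
open scoped ENNReal

noncomputable section

/-- The number of primes `p ≤ x` with `p ≡ a (mod q)`. -/
def primesCount (q : ℕ) (a : ZMod q) (x : ℝ) : ℕ :=
  ((Finset.range (Nat.floor x + 1)).filter (fun p : ℕ => p.Prime ∧ (p : ZMod q) = a)).card

/-- The number of primes `p ≤ x`. -/
def primePi (x : ℝ) : ℕ :=
  ((Finset.range (Nat.floor x + 1)).filter Nat.Prime).card

/-- A system `B` of hypothetical zeros: to each non-principal Dirichlet character mod `q`
it assigns a multiset of complex numbers with nonnegative imaginary parts, recorded via the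
multiplicity function `mult`.  `Rminus` and `Rplus` are the infimum and supremum of the real
parts; they satisfy `1/2 < Rminus ≤ Rplus ≤ 1`, and `∑ n(ρ,χ)/|ρ| < ∞`. -/
structure ZeroSystem (q : ℕ) where
  mult : DirichletCharacter ℂ q → ℂ → ℕ
  Rminus : ℝ
  Rplus : ℝ
  mult_principal : ∀ ρ : ℂ, mult 1 ρ = 0
  im_nonneg : ∀ χ ρ, mult χ ρ ≠ 0 → 0 ≤ ρ.im
  real_conj : ∀ χ (ρ : ℂ), ρ.im = 0 → mult χ ρ = mult (χ.ringHomComp (starRingEnd ℂ)) ρ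
  isGLB_Rminus : IsGLB {r : ℝ | ∃ χ ρ, mult χ ρ ≠ 0 ∧ ρ.re = r} Rminus
  isLUB_Rplus : IsLUB {r : ℝ | ∃ χ ρ, mult χ ρ ≠ 0 ∧ ρ.re = r} Rplus
  half_lt_Rminus : 1 / 2 < Rminus
  Rplus_le_one : Rplus ≤ 1
  summable_inv : Summable (fun p : DirichletCharacter ℂ q × ℂ =>
    (mult p.1 p.2 : ℝ) / ‖p.2‖)

/-- `f(ρ) = x^ρ/(ρ log x) + (1/ρ) ∫₂ˣ t^(ρ-1)/log² t dt`. -/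
def fterm (ρ : ℂ) (x : ℝ) : ℂ :=
  (x : ℂ) ^ ρ / (ρ * (Real.log x : ℂ)) +
    (1 / ρ) * ∫ t in (2:ℝ)..x, (t : ℂ) ^ (ρ - 1) / ((Real.log t : ℂ)) ^ 2

/-- The weight in `Σ*`: summands with real `ρ` are halved. -/
def rstar (ρ : ℂ) : ℝ := if ρ.im = 0 then 1 / 2 else 1

/-- `P_{q,a}(x;B)`. -/
def Pfun {q : ℕ} (B : ZeroSystem q) (a : (ZMod q)ˣ) (x : ℝ) : ℝ :=
  (primePi x : ℝ) / (Nat.totient q) -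
    (2 / (Nat.totient q)) *
      (∑' p : DirichletCharacter ℂ q × ℂ,
        (starRingEnd ℂ) (p.1 (a : ZMod q)) *
          ((rstar p.2 * B.mult p.1 p.2 : ℝ) : ℂ) * fterm p.2 x).re

/-- Two functions are `β`-similar if their difference is `o(x^β / log x)` as `x → ∞`. -/
def SimilarTo (β : ℝ) (F G : ℝ → ℝ) : Prop :=
  (fun x => F x - G x) =o[atTop] fun x => x ^ β / Real.log x

/-- A family `F` indexed by `F_q^*` is similar to the family `P_q` of the system `B`. -/
def FamilySimilar {q : ℕ} (β : ℝ) (F : (ZMod q)ˣ → ℝ → ℝ) (B : ZeroSystem q) : Prop :=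
  ∀ a : (ZMod q)ˣ, SimilarTo β (F a) (Pfun B a)

/-- `g(ρ; a, b) = Σ_χ n(ρ,χ)(χ(a) - χ(b))`. -/
def gcoef {q : ℕ} (B : ZeroSystem q) (ρ : ℂ) (a b : (ZMod q)ˣ) : ℂ :=
  ∑' χ : DirichletCharacter ℂ q, (B.mult χ ρ : ℂ) * (χ (a : ZMod q) - χ (b : ZMod q))

/-- `β(a,b) = sup { Re ρ : g(ρ; a,b) ≠ 0 }`. -/
def betaAB {q : ℕ} (B : ZeroSystem q) (a b : (ZMod q)ˣ) : ℝ :=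
  sSup {r : ℝ | ∃ ρ : ℂ, gcoef B ρ a b ≠ 0 ∧ ρ.re = r}

/-- `z(a,b) = ⋃_χ { ρ ∈ B(χ) : g(ρ;a,b) ≠ 0, Re ρ = β(a,b) }`. -/
def zset {q : ℕ} (B : ZeroSystem q) (a b : (ZMod q)ˣ) : Set ℂ :=
  {ρ : ℂ | (∃ χ, B.mult χ ρ ≠ 0) ∧ gcoef B ρ a b ≠ 0 ∧ ρ.re = betaAB B a b}

/-- A family of functions is good if any two members that change relative order attain
equal values in between. -/
def GoodFamily {q : ℕ} (F : (ZMod q)ˣ → ℝ → ℝ) : Prop :=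
  ∀ a b : (ZMod q)ˣ, ∀ x y : ℝ, F a x < F b x → F b y < F a y →
    ∃ w, min x y ≤ w ∧ w ≤ max x y ∧ F a w = F b w

/-- `B` is a KT-system for `D`. -/
def IsKTSystem {q : ℕ} (B : ZeroSystem q) (D : Set (ZMod q)ˣ) : Prop :=
  ∀ F : (ZMod q)ˣ → ℝ → ℝ, FamilySimilar B.Rminus F B →
    ∀ a ∈ D, ∀ b ∈ D, a ≠ b → ∀ X : ℝ, ∃ x > X, F b x < F a x

/-- The number of orderings of the functions `F_{q,a}`, `a ∈ D`, which occur for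
arbitrarily large `x`. -/
def orderingsCount {q : ℕ} (F : (ZMod q)ˣ → ℝ → ℝ) (D : Finset (ZMod q)ˣ) : ℕ :=
  Set.ncard {σ : Fin D.card ≃ {a // a ∈ D} |
    ∀ X : ℝ, ∃ x > X, ∀ i j : Fin D.card, i ≤ j → F (σ j) x ≤ F (σ i) x}

/-- The total size `|B|` of a system, as an extended nonnegative real. -/
def systemSize {q : ℕ} (B : ZeroSystem q) : ℝ≥0∞ :=
  ∑' p : DirichletCharacter ℂ q × ℂ, (B.mult p.1 p.2 : ℝ≥0∞)

/-- `B` is an extremal barrier for `D`: a KT-system for `D` that is a barrier for the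
statement `s(D;F) ≥ |D|(|D|-1)/2 + 2`. -/
def IsExtremalBarrier {q : ℕ} (B : ZeroSystem q) (D : Finset (ZMod q)ˣ) : Prop :=
  IsKTSystem B (D : Set (ZMod q)ˣ) ∧
    ∀ F : (ZMod q)ˣ → ℝ → ℝ, FamilySimilar B.Rminus F B →
      ¬ (D.card * (D.card - 1) / 2 + 2 ≤ orderingsCount F D)


section AuxSort

open Finset

/-- Auxiliary: the hypercube lemma. If a family `V` of finsets uses every "direction"
`p ∈ P` (i.e. contains some `A` and `insert p A` with `p ∉ A`), then `|V| ≥ |P| + 1`. -/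
private lemma aux_hypercube {α : Type*} [DecidableEq α] (P : Finset α) :
    ∀ V : Finset (Finset α), V.Nonempty →
      (∀ p ∈ P, ∃ A, p ∉ A ∧ A ∈ V ∧ insert p A ∈ V) → P.card + 1 ≤ V.card := by
  classical
  induction P using Finset.induction with
  | empty => intro V hV _; simpa using hV.card_pos
  | @insert p P hp IH =>
    intro V hV h
    obtain ⟨A, hpA, hA, hiA⟩ := h p (mem_insert_self p P)
    set W : Finset (Finset α) := V.image (fun B => B.erase p) with hW
    have hWne : W.Nonempty := hV.image _
    have hWV : W = (V.erase (insert p A)).image (fun B => B.erase p) := by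
      ext B
      simp only [hW, Finset.mem_image, Finset.mem_erase]
      constructor
      · rintro ⟨C, hC, rfl⟩
        by_cases hCA : C = insert p A
        · refine ⟨A, ⟨?_, hA⟩, ?_⟩
          · intro hAA
            exact hpA (hAA ▸ Finset.mem_insert_self p A)
          · rw [hCA, Finset.erase_insert hpA]
            exact Finset.erase_eq_of_notMem hpA
        · exact ⟨C, ⟨hCA, hC⟩, rfl⟩
      · rintro ⟨C, ⟨_, hC⟩, rfl⟩
        exact ⟨C, hC, rfl⟩
    have hWcard : W.card + 1 ≤ V.card := by
      have h1 : W.card ≤ (V.erase (insert p A)).card := hWV ▸ Finset.card_image_le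
      have h2 : (V.erase (insert p A)).card = V.card - 1 :=
        Finset.card_erase_of_mem hiA
      have h3 : 1 ≤ V.card := hV.card_pos
      omega
    have hWh : ∀ q ∈ P, ∃ A, q ∉ A ∧ A ∈ W ∧ insert q A ∈ W := by
      intro q hq
      have hqp : q ≠ p := fun e => hp (e ▸ hq)
      obtain ⟨A', hqA', hA', hiA'⟩ := h q (mem_insert_of_mem hq)
      refine ⟨A'.erase p, fun hmem => hqA' (Finset.mem_of_mem_erase hmem), ?_, ?_⟩
      · exact Finset.mem_image_of_mem _ hA'
      · have heq : insert q (A'.erase p) = (insert q A').erase p :=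
          (Finset.erase_insert_of_ne hqp).symm
        rw [heq]
        exact Finset.mem_image_of_mem _ hiA'
    have := IH W hWne hWh
    rw [Finset.card_insert_of_notMem hp]
    omega

private lemma aux_card_pairs (r : ℕ) :
    ((Finset.univ : Finset (Fin r × Fin r)).filter fun p => p.1 < p.2).card
      = r * (r - 1) / 2 := by
  classical
  rw [Finset.card_eq_sum_card_fiberwise
    (f := fun p : Fin r × Fin r => p.2) (t := Finset.univ) (fun x _ => Finset.mem_univ _)]
  have hfib : ∀ j : Fin r,
      (((Finset.univ : Finset (Fin r × Fin r)).filter fun p => p.1 < p.2).filter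
        fun p => p.2 = j).card = (j : ℕ) := by
    intro j
    have : (((Finset.univ : Finset (Fin r × Fin r)).filter fun p => p.1 < p.2).filter
        fun p => p.2 = j) = (Finset.Iio j).image (fun i => (i, j)) := by
      ext ⟨x, y⟩
      simp only [Finset.mem_filter, Finset.mem_univ, true_and, Finset.mem_image,
        Finset.mem_Iio, Prod.mk.injEq]
      constructor
      · rintro ⟨hxy, rfl⟩; exact ⟨x, hxy, rfl, rfl⟩
      · rintro ⟨i, hi, rfl, rfl⟩; exact ⟨hi, rfl⟩
    rw [this, Finset.card_image_of_injective _ (fun x y h => (Prod.mk.injEq _ _ _ _ ▸ h : _ ∧ _).1),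
      Fin.card_Iio]
  calc ∑ j : Fin r, (((Finset.univ : Finset (Fin r × Fin r)).filter fun p => p.1 < p.2).filter
        fun p => p.2 = j).card
      = ∑ j : Fin r, (j : ℕ) := Finset.sum_congr rfl (fun j _ => hfib j)
    _ = ∑ i ∈ Finset.range r, i := Fin.sum_univ_eq_sum_range (fun i => i) r
    _ = r * (r - 1) / 2 := Finset.sum_range_id r

private lemma aux_recurrent {γ : Type*} [Finite γ] (g : ℕ → γ) :
    ∃ c : γ, {n : ℕ | g n = c}.Infinite := by
  obtain ⟨c, hc⟩ := Finite.exists_infinite_fiber g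
  exact ⟨c, Set.infinite_coe_iff.mp hc⟩

variable {r : ℕ}

/-- Sorting permutation by decreasing `v`, ties broken by increasing `key`. -/
private noncomputable def sortKey (v : Fin r → ℝ) (key : Fin r → ℕ) : Equiv.Perm (Fin r) :=
  Tuple.sort (fun k => toLex (-(v k), key k) : Fin r → ℝ ×ₗ ℕ)

private lemma sortKey_antitone (v : Fin r → ℝ) (key : Fin r → ℕ) :
    ∀ i j : Fin r, i ≤ j → v (sortKey v key j) ≤ v (sortKey v key i) := by
  intro i j hij
  have h := Tuple.monotone_sort (fun k => toLex (-(v k), key k) : Fin r → ℝ ×ₗ ℕ) hij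
  rcases Prod.Lex.le_iff.mp h with h' | ⟨h', _⟩
  · exact le_of_lt (by
      have h'' : -(v (sortKey v key i)) < -(v (sortKey v key j)) := h'
      simpa using h'')
  · have : -(v (sortKey v key i)) = -(v (sortKey v key j)) := h'
    simp only [neg_inj] at this
    exact le_of_eq this.symm

private lemma sortKey_symm_lt (v : Fin r → ℝ) {key : Fin r → ℕ}
    (hkey : Function.Injective key) (k l : Fin r) :
    (sortKey v key).symm k < (sortKey v key).symm l ↔
      toLex (-(v k), key k) < toLex (-(v l), key l) := by
  set G : Fin r → ℝ ×ₗ ℕ := fun k => toLex (-(v k), key k) with hG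
  have hGinj : Function.Injective G := by
    intro x y h
    exact hkey (congrArg (fun p : ℝ ×ₗ ℕ => (ofLex p).2) h)
  have hmono : StrictMono (G ∘ (sortKey v key)) :=
    (Tuple.monotone_sort G).strictMono_of_injective
      (hGinj.comp (Equiv.injective _))
  have hiff : ∀ m m' : Fin r, (G ∘ (sortKey v key)) m < (G ∘ (sortKey v key)) m' ↔ m < m' :=
    fun m m' => hmono.lt_iff_lt
  have := (hiff ((sortKey v key).symm k) ((sortKey v key).symm l)).symm
  simpa [Function.comp] using this

private def Eset (σ : Equiv.Perm (Fin r)) : Finset (Fin r × Fin r) :=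
  Finset.univ.filter fun p => p.1 < p.2 ∧ σ.symm p.2 < σ.symm p.1

private lemma mem_Eset {σ : Equiv.Perm (Fin r)} {p : Fin r × Fin r} :
    p ∈ Eset σ ↔ p.1 < p.2 ∧ σ.symm p.2 < σ.symm p.1 := by
  simp [Eset]

private lemma Eset_injective : Function.Injective (Eset (r := r)) := by
  intro σ τ h
  have aux : ∀ (ρ : Equiv.Perm (Fin r)) (k l : Fin r), k ≠ l →
      (ρ.symm k < ρ.symm l ↔ ¬ ρ.symm l < ρ.symm k) := by
    intro ρ k l hne
    have hne' : ρ.symm k ≠ ρ.symm l := fun e => hne (ρ.symm.injective e)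
    constructor
    · exact fun h h' => absurd (h.trans h') (lt_irrefl _)
    · intro h'
      rcases hne'.lt_or_gt with h'' | h''
      · exact h''
      · exact absurd h'' h'
  have key : ∀ k l : Fin r, σ.symm k < σ.symm l ↔ τ.symm k < τ.symm l := by
    intro k l
    rcases lt_trichotomy k l with hkl | rfl | hkl
    · have hm : ((k, l) ∈ Eset σ) ↔ ((k, l) ∈ Eset τ) := by rw [h]
      simp only [mem_Eset, hkl, true_and] at hm
      rw [aux σ k l hkl.ne, aux τ k l hkl.ne, hm]
    · simp
    · have hm : ((l, k) ∈ Eset σ) ↔ ((l, k) ∈ Eset τ) := by rw [h]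
      simpa only [mem_Eset, hkl, true_and] using hm
  have hst : StrictMono (⇑(σ.trans τ.symm)) := by
    intro m m' hmm'
    have h1 : σ.symm (σ m) < σ.symm (σ m') := by simpa using hmm'
    exact (key (σ m) (σ m')).mp h1
  have hid : ⇑(σ.trans τ.symm) = id := by
    have hwf : WellFoundedLT (Fin r) := inferInstance
    refine (StrictMono.range_inj (f := ⇑(σ.trans τ.symm)) (g := id) hst strictMono_id).mp ?_
    rw [Set.range_id, Equiv.range_eq_univ]
  refine Equiv.ext fun m => ?_
  have h2 := congrFun hid m
  simp only [Equiv.trans_apply, id] at h2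
  exact (Equiv.symm_apply_eq τ).mp h2

private lemma mem_Eset_sortKey (v : Fin r → ℝ) {key : Fin r → ℕ}
    (hkey : Function.Injective key) (k l : Fin r) :
    (k, l) ∈ Eset (sortKey v key) ↔
      k < l ∧ (v k < v l ∨ (v k = v l ∧ key l < key k)) := by
  rw [mem_Eset]
  constructor
  · rintro ⟨hkl, hlt⟩
    refine ⟨hkl, ?_⟩
    rcases Prod.Lex.lt_iff.mp ((sortKey_symm_lt v hkey l k).mp hlt) with h' | ⟨h', h''⟩
    · left; simpa using h'
    · right
      have : v l = v k := by simpa using h'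
      exact ⟨this.symm, h''⟩
  · rintro ⟨hkl, hlt⟩
    refine ⟨hkl, (sortKey_symm_lt v hkey l k).mpr (Prod.Lex.lt_iff.mpr ?_)⟩
    rcases hlt with h' | ⟨h', h''⟩
    · left; simpa using h'
    · right; exact ⟨by simp [h'], h''⟩

/-- The key edge construction: if `v i = v j` with `i < j`, there are two sorting
permutations whose inversion sets differ exactly in the pair `(i,j)`. -/
private lemma exists_edge (v : Fin r → ℝ) {i j : Fin r} (hij : i < j) (hv : v i = v j) :
    ∃ σ τ : Equiv.Perm (Fin r),
      (∀ k l : Fin r, k ≤ l → v (σ l) ≤ v (σ k)) ∧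
      (∀ k l : Fin r, k ≤ l → v (τ l) ≤ v (τ k)) ∧
      (i, j) ∉ Eset σ ∧ Eset τ = insert (i, j) (Eset σ) := by
  classical
  have hij' : (i : ℕ) < (j : ℕ) := hij
  set key₁ : Fin r → ℕ := fun k => if k = i then 2 * (j : ℕ) + 1 else 2 * (k : ℕ) + 2
    with hk1
  set key₂ : Fin r → ℕ := fun k => if k = i then 2 * (j : ℕ) + 3 else 2 * (k : ℕ) + 2
    with hk2
  have hinj1 : Function.Injective key₁ := by
    intro x y hxy
    simp only [hk1] at hxy
    by_cases hx : x = i <;> by_cases hy : y = i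
    · rw [hx, hy]
    · rw [if_pos hx, if_neg hy] at hxy; exact absurd hxy (by omega)
    · rw [if_neg hx, if_pos hy] at hxy; exact absurd hxy (by omega)
    · rw [if_neg hx, if_neg hy] at hxy; exact Fin.val_injective (by omega)
  have hinj2 : Function.Injective key₂ := by
    intro x y hxy
    simp only [hk2] at hxy
    by_cases hx : x = i <;> by_cases hy : y = i
    · rw [hx, hy]
    · rw [if_pos hx, if_neg hy] at hxy; exact absurd hxy (by omega)
    · rw [if_neg hx, if_pos hy] at hxy; exact absurd hxy (by omega)
    · rw [if_neg hx, if_neg hy] at hxy; exact Fin.val_injective (by omega)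
  refine ⟨sortKey v key₁, sortKey v key₂, sortKey_antitone v key₁, sortKey_antitone v key₂,
    ?_, ?_⟩
  · rw [mem_Eset_sortKey v hinj1]
    rintro ⟨-, h' | ⟨-, h''⟩⟩
    · exact absurd h' (by rw [hv]; exact lt_irrefl _)
    · simp only [hk1, if_neg hij.ne', if_pos rfl] at h''
      omega
  · have hkeyiff : ∀ k l : Fin r, k < l → ¬(k = i ∧ l = j) →
        (key₁ l < key₁ k ↔ key₂ l < key₂ k) := by
      intro k l hkl hne
      have hkl' : (k : ℕ) < (l : ℕ) := hkl
      by_cases hki : k = i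
      · have hlj : l ≠ j := fun e => hne ⟨hki, e⟩
        have hli : l ≠ i := by
          rintro rfl
          have h2 : (k : ℕ) = (l : ℕ) := congrArg Fin.val hki
          omega
        have hlj' : (l : ℕ) ≠ (j : ℕ) := fun e => hlj (Fin.val_injective e)
        simp only [hk1, hk2, if_pos hki, if_neg hli]
        omega
      · by_cases hli : l = i
        · have hki' : (k : ℕ) < (i : ℕ) := hli ▸ hkl
          simp only [hk1, hk2, if_pos hli, if_neg hki]
          omega
        · simp only [hk1, hk2, if_neg hki, if_neg hli]
    ext p
    obtain ⟨k, l⟩ := p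
    rw [mem_Eset_sortKey v hinj2, Finset.mem_insert, mem_Eset_sortKey v hinj1, Prod.mk.injEq]
    by_cases hp : k = i ∧ l = j
    · obtain ⟨rfl, rfl⟩ := hp
      constructor
      · intro _; left; exact ⟨rfl, rfl⟩
      · intro _
        refine ⟨hij, Or.inr ⟨hv, ?_⟩⟩
        simp only [hk2, if_neg hij.ne', if_pos rfl]
        omega
    · by_cases hkl : k < l
      · have hiff := hkeyiff k l hkl hp
        constructor
        · rintro ⟨-, h' | ⟨h', h''⟩⟩
          · exact Or.inr ⟨hkl, Or.inl h'⟩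
          · exact Or.inr ⟨hkl, Or.inr ⟨h', hiff.mpr h''⟩⟩
        · rintro (⟨rfl, rfl⟩ | ⟨-, h' | ⟨h', h''⟩⟩)
          · exact absurd ⟨rfl, rfl⟩ hp
          · exact ⟨hkl, Or.inl h'⟩
          · exact ⟨hkl, Or.inr ⟨h', hiff.mp h''⟩⟩
      · constructor
        · rintro ⟨h', -⟩; exact absurd h' hkl
        · rintro (⟨rfl, rfl⟩ | ⟨h', -⟩)
          · exact absurd hij hkl
          · exact absurd h' hkl

end AuxSort

theorem statement16 (q : ℕ) (hq : 3 ≤ q) (r : ℕ) (a : Fin r → (ZMod q)ˣ)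
    (ha : Function.Injective a) (B : ZeroSystem q)
    (hKT : IsKTSystem B (Set.range a))
    (F : (ZMod q)ˣ → ℝ → ℝ) (hgood : GoodFamily F)
    (hF : FamilySimilar B.Rminus F B) :
    r * (r - 1) / 2 + 1 ≤
      Set.ncard {σ : Equiv.Perm (Fin r) |
        ∀ X : ℝ, ∃ x > X, ∀ i j : Fin r, i ≤ j → F (a (σ j)) x ≤ F (a (σ i)) x} := by
  classical
  set S : Set (Equiv.Perm (Fin r)) := {σ : Equiv.Perm (Fin r) |
      ∀ X : ℝ, ∃ x > X, ∀ i j : Fin r, i ≤ j → F (a (σ j)) x ≤ F (a (σ i)) x} with hSdef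
  have hSfin : S.Finite := Set.toFinite S
  rcases le_or_gt r 1 with hr | hr
  · -- degenerate case `r ≤ 1`
    have h1 : (1 : Equiv.Perm (Fin r)) ∈ S := by
      intro X
      refine ⟨X + 1, by linarith, fun i j hij => ?_⟩
      have hi := i.isLt
      have hj := j.isLt
      have : i = j := Fin.ext (by omega)
      rw [this]
    have hpos : 0 < S.ncard := (Set.ncard_pos hSfin).mpr ⟨1, h1⟩
    have hz : r * (r - 1) = 0 := by
      rcases Nat.le_one_iff_eq_zero_or_eq_one.mp hr with rfl | rfl <;> simp
    have hz2 : r * (r - 1) / 2 = 0 := by rw [hz]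
    omega
  · -- main case `2 ≤ r`
    have hedge : ∀ p : Fin r × Fin r, p.1 < p.2 →
        ∃ σ τ : Equiv.Perm (Fin r), σ ∈ S ∧ τ ∈ S ∧
          p ∉ Eset σ ∧ Eset τ = insert p (Eset σ) := by
      rintro ⟨i, j⟩ hij
      have hab : a i ≠ a j := fun e => (ne_of_lt hij) (ha e)
      have hcross : ∀ n : ℕ, ∃ w : ℝ, (n : ℝ) < w ∧ F (a i) w = F (a j) w := by
        intro n
        obtain ⟨x, hx, hx2⟩ := hKT F hF (a j) ⟨j, rfl⟩ (a i) ⟨i, rfl⟩ (fun e => hab e.symm) n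
        obtain ⟨y, hy, hy2⟩ := hKT F hF (a i) ⟨i, rfl⟩ (a j) ⟨j, rfl⟩ hab x
        obtain ⟨w, hw1, _, hweq⟩ := hgood (a i) (a j) x y hx2 hy2
        refine ⟨w, lt_of_lt_of_le hx ?_, hweq⟩
        calc x = min x y := (min_eq_left (le_of_lt hy)).symm
          _ ≤ w := hw1
      have hchoice : ∀ n : ℕ, ∃ st : Equiv.Perm (Fin r) × Equiv.Perm (Fin r), ∃ w : ℝ,
          (n : ℝ) < w ∧
          (∀ k l : Fin r, k ≤ l → F (a (st.1 l)) w ≤ F (a (st.1 k)) w) ∧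
          (∀ k l : Fin r, k ≤ l → F (a (st.2 l)) w ≤ F (a (st.2 k)) w) ∧
          (i, j) ∉ Eset st.1 ∧ Eset st.2 = insert (i, j) (Eset st.1) := by
        intro n
        obtain ⟨w, hw, heq⟩ := hcross n
        obtain ⟨σ, τ, h1, h2, h3, h4⟩ := exists_edge (fun k => F (a k) w) hij heq
        exact ⟨(σ, τ), w, hw, h1, h2, h3, h4⟩
      choose g w hw h1 h2 h3 h4 using hchoice
      obtain ⟨c, hc⟩ := aux_recurrent g
      have hmem1 : c.1 ∈ S := by
        intro X
        obtain ⟨n, hn1, hn2⟩ := hc.exists_gt ⌈X⌉₊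
        refine ⟨w n, ?_, ?_⟩
        · calc X ≤ (⌈X⌉₊ : ℝ) := Nat.le_ceil X
            _ < (n : ℝ) := by exact_mod_cast hn2
            _ < w n := hw n
        · have := h1 n
          rw [hn1] at this
          exact this
      have hmem2 : c.2 ∈ S := by
        intro X
        obtain ⟨n, hn1, hn2⟩ := hc.exists_gt ⌈X⌉₊
        refine ⟨w n, ?_, ?_⟩
        · calc X ≤ (⌈X⌉₊ : ℝ) := Nat.le_ceil X
            _ < (n : ℝ) := by exact_mod_cast hn2
            _ < w n := hw n
        · have := h2 n
          rw [hn1] at this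
          exact this
      obtain ⟨n0, hn0⟩ := hc.nonempty
      refine ⟨c.1, c.2, hmem1, hmem2, ?_, ?_⟩
      · have := h3 n0; rw [hn0] at this; exact this
      · have := h4 n0; rw [hn0] at this; exact this
    set P : Finset (Fin r × Fin r) :=
      (Finset.univ : Finset (Fin r × Fin r)).filter (fun p => p.1 < p.2) with hP
    set Sfin : Finset (Equiv.Perm (Fin r)) := hSfin.toFinset with hSfin'
    set V : Finset (Finset (Fin r × Fin r)) := Sfin.image Eset with hV
    have hVhyp : ∀ p ∈ P, ∃ A, p ∉ A ∧ A ∈ V ∧ insert p A ∈ V := by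
      intro p hp
      have hp' : p.1 < p.2 := by
        rw [hP] at hp
        exact (Finset.mem_filter.mp hp).2
      obtain ⟨σ, τ, hσ, hτ, hh3, hh4⟩ := hedge p hp'
      refine ⟨Eset σ, hh3, ?_, ?_⟩
      · exact Finset.mem_image_of_mem _ (hSfin.mem_toFinset.mpr hσ)
      · rw [← hh4]
        exact Finset.mem_image_of_mem _ (hSfin.mem_toFinset.mpr hτ)
    have hVne : V.Nonempty := by
      have h01 : (⟨0, by omega⟩ : Fin r) < (⟨1, by omega⟩ : Fin r) := by
        simp [Fin.lt_def]
      obtain ⟨σ, τ, hσ, -, -, -⟩ :=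
        hedge ((⟨0, by omega⟩ : Fin r), (⟨1, by omega⟩ : Fin r)) h01
      exact ⟨Eset σ, Finset.mem_image_of_mem _ (hSfin.mem_toFinset.mpr hσ)⟩
    have hcube := aux_hypercube P V hVne hVhyp
    have hcard : V.card ≤ Sfin.card := Finset.card_image_le
    have hncard : S.ncard = Sfin.card := Set.ncard_eq_toFinset_card S hSfin
    have hPcard : P.card = r * (r - 1) / 2 := aux_card_pairs r
    omega

end
end

section
/- Let r be a positive integer and let c_v, d_v (v = 0, …, r−1) be real numbers such that c_v = c_{r−v} for v = 1, …, r−1, d₀ = 0, and d_v = −d_{r−v} for v = 1, …, r−1. Then there exist real numbers ν_j (j = 0, …, r−1) such that for every v ∈ {0, …, r−1} and every real u, Σ_{j=0}^{r−1} ν_j sin(u + 2πjv/r) = c_v sin u + d_v cos u. -/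
-- product-to-sum identities
private lemma cosc (x y : ℝ) : Real.cos x * Real.cos y = (Real.cos (x - y) + Real.cos (x + y)) / 2 := by
  rw [Real.cos_sub, Real.cos_add]; ring

private lemma sinc (x y : ℝ) : Real.sin x * Real.cos y = (Real.sin (x + y) + Real.sin (x - y)) / 2 := by
  rw [Real.sin_add, Real.sin_sub]; ring

private lemma sins (x y : ℝ) : Real.sin x * Real.sin y = (Real.cos (x - y) - Real.cos (x + y)) / 2 := by
  rw [Real.cos_sub, Real.cos_add]; ring

private lemma sum_exp (r : ℕ) (hr : 0 < r) (m : ℤ) :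
    ∑ j ∈ Finset.range r, Complex.exp (((2 * Real.pi * j * m / r : ℝ) : ℂ) * Complex.I)
      = if (r : ℤ) ∣ m then (r : ℂ) else 0 := by
  have hrR : (r : ℝ) ≠ 0 := Nat.cast_ne_zero.mpr hr.ne'
  have hrC : (r : ℂ) ≠ 0 := Nat.cast_ne_zero.mpr hr.ne'
  have hterm : ∀ j ∈ Finset.range r,
      Complex.exp (((2 * Real.pi * j * m / r : ℝ) : ℂ) * Complex.I)
        = Complex.exp (((2 * Real.pi * m / r : ℝ) : ℂ) * Complex.I) ^ j := by
    intro j _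
    rw [← Complex.exp_nat_mul]
    congr 1
    push_cast
    ring
  rw [Finset.sum_congr rfl hterm]
  by_cases h : (r : ℤ) ∣ m
  · obtain ⟨k, hk⟩ := h
    have hx1 : Complex.exp (((2 * Real.pi * m / r : ℝ) : ℂ) * Complex.I) = 1 := by
      have harg : (((2 * Real.pi * m / r : ℝ) : ℂ) * Complex.I)
          = (k : ℤ) * (2 * Real.pi * Complex.I) := by
        push_cast [hk]
        field_simp
      rw [harg]
      exact Complex.exp_int_mul_two_pi_mul_I k
    rw [if_pos ⟨k, hk⟩]
    simp only [hx1, one_pow, Finset.sum_const, Finset.card_range, nsmul_eq_mul, mul_one]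
  · have hx1 : Complex.exp (((2 * Real.pi * m / r : ℝ) : ℂ) * Complex.I) ≠ 1 := by
      intro hcon
      rw [Complex.exp_eq_one_iff] at hcon
      obtain ⟨n, hn⟩ := hcon
      apply h
      refine ⟨n, ?_⟩
      have him := congrArg Complex.im hn
      simp [Complex.mul_im] at him
      have hpi : (0:ℝ) < 2 * Real.pi := by positivity
      have hmr : (m : ℝ) = r * n := by
        field_simp at him
        nlinarith [Real.pi_pos]
      exact_mod_cast hmr
    rw [geom_sum_eq hx1]
    have hxr : Complex.exp (((2 * Real.pi * m / r : ℝ) : ℂ) * Complex.I) ^ r = 1 := by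
      rw [← Complex.exp_nat_mul]
      have harg : (r : ℂ) * (((2 * Real.pi * m / r : ℝ) : ℂ) * Complex.I)
          = (m : ℤ) * (2 * Real.pi * Complex.I) := by
        push_cast
        field_simp
      rw [harg]
      exact Complex.exp_int_mul_two_pi_mul_I m
    rw [if_neg h, hxr]
    simp

private lemma sum_cos (r : ℕ) (hr : 0 < r) (m : ℤ) :
    ∑ j ∈ Finset.range r, Real.cos (2 * Real.pi * j * m / r)
      = if (r : ℤ) ∣ m then (r : ℝ) else 0 := by
  have h := congrArg Complex.re (sum_exp r hr m)
  rw [Complex.re_sum] at h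
  simp only [Complex.exp_ofReal_mul_I_re] at h
  rw [h, apply_ite Complex.re]
  split <;> simp

private lemma sum_sin (r : ℕ) (hr : 0 < r) (m : ℤ) :
    ∑ j ∈ Finset.range r, Real.sin (2 * Real.pi * j * m / r) = 0 := by
  have h := congrArg Complex.im (sum_exp r hr m)
  rw [Complex.im_sum] at h
  simp only [Complex.exp_ofReal_mul_I_im] at h
  rw [h, apply_ite Complex.im]
  split <;> simp

private lemma sum_cc (r : ℕ) (hr : 0 < r) (a b : ℕ) :
    ∑ j ∈ Finset.range r, Real.cos (2 * Real.pi * j * a / r) * Real.cos (2 * Real.pi * j * b / r)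
      = ((if (r : ℤ) ∣ ((a : ℤ) - b) then (r : ℝ) else 0)
          + (if (r : ℤ) ∣ ((a : ℤ) + b) then (r : ℝ) else 0)) / 2 := by
  have h1 : ∀ j : ℕ, Real.cos (2 * Real.pi * j * a / r) * Real.cos (2 * Real.pi * j * b / r)
      = (Real.cos (2 * Real.pi * j * (((a : ℤ) - b : ℤ) : ℝ) / r)
          + Real.cos (2 * Real.pi * j * (((a : ℤ) + b : ℤ) : ℝ) / r)) / 2 := by
    intro j
    rw [cosc]
    congr 2 <;> push_cast <;> ring
  simp only [h1]
  rw [← Finset.sum_div, Finset.sum_add_distrib, sum_cos r hr, sum_cos r hr]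

private lemma sum_sc (r : ℕ) (hr : 0 < r) (a b : ℕ) :
    ∑ j ∈ Finset.range r, Real.sin (2 * Real.pi * j * a / r) * Real.cos (2 * Real.pi * j * b / r)
      = 0 := by
  have h1 : ∀ j : ℕ, Real.sin (2 * Real.pi * j * a / r) * Real.cos (2 * Real.pi * j * b / r)
      = (Real.sin (2 * Real.pi * j * (((a : ℤ) + b : ℤ) : ℝ) / r)
          + Real.sin (2 * Real.pi * j * (((a : ℤ) - b : ℤ) : ℝ) / r)) / 2 := by
    intro j
    rw [sinc]
    congr 2 <;> push_cast <;> ring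
  simp only [h1]
  rw [← Finset.sum_div, Finset.sum_add_distrib, sum_sin r hr, sum_sin r hr]
  norm_num

private lemma sum_ss (r : ℕ) (hr : 0 < r) (a b : ℕ) :
    ∑ j ∈ Finset.range r, Real.sin (2 * Real.pi * j * a / r) * Real.sin (2 * Real.pi * j * b / r)
      = ((if (r : ℤ) ∣ ((a : ℤ) - b) then (r : ℝ) else 0)
          - (if (r : ℤ) ∣ ((a : ℤ) + b) then (r : ℝ) else 0)) / 2 := by
  have h1 : ∀ j : ℕ, Real.sin (2 * Real.pi * j * a / r) * Real.sin (2 * Real.pi * j * b / r)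
      = (Real.cos (2 * Real.pi * j * (((a : ℤ) - b : ℤ) : ℝ) / r)
          - Real.cos (2 * Real.pi * j * (((a : ℤ) + b : ℤ) : ℝ) / r)) / 2 := by
    intro j
    rw [sins]
    congr 2 <;> push_cast <;> ring
  simp only [h1]
  rw [← Finset.sum_div, Finset.sum_sub_distrib, sum_cos r hr, sum_cos r hr]

private lemma dvd_small (r : ℕ) (_hr : 0 < r) (a : ℤ) (h1 : |a| < r) (h2 : (r : ℤ) ∣ a) :
    a = 0 := by
  rcases eq_or_ne a 0 with h | h
  · exact h
  · have := Int.le_of_dvd (abs_pos.mpr h) ((dvd_abs _ _).mpr h2)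
    omega

/-- Lemma 4.4. -/
theorem statement18 (r : ℕ) (hr : 0 < r) (c d : ℕ → ℝ)
    (hc : ∀ v, 1 ≤ v → v ≤ r - 1 → c v = c (r - v))
    (hd0 : d 0 = 0)
    (hd : ∀ v, 1 ≤ v → v ≤ r - 1 → d v = -d (r - v)) :
    ∃ ν : ℕ → ℝ, ∀ v < r, ∀ u : ℝ,
      ∑ j ∈ Finset.range r, ν j * Real.sin (u + 2 * Real.pi * j * v / r) =
        c v * Real.sin u + d v * Real.cos u := by
  have hrR : (r : ℝ) ≠ 0 := Nat.cast_ne_zero.mpr hr.ne'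
  set ν : ℕ → ℝ := fun j => (∑ w ∈ Finset.range r,
      (c w * Real.cos (2 * Real.pi * j * w / r)
        + d w * Real.sin (2 * Real.pi * j * w / r))) / r with hν
  refine ⟨ν, ?_⟩
  intro v hv u
  -- the "mirror" index
  set w' : ℕ := if v = 0 then 0 else r - v with hw'
  have hw'mem : w' ∈ Finset.range r := by
    rw [Finset.mem_range, hw']
    split <;> omega
  have hvmem : v ∈ Finset.range r := Finset.mem_range.mpr hv
  have hcw : c w' = c v := by
    rw [hw']
    split
    · next h => rw [h]
    · next h => exact (hc v (by omega) (by omega)).symm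
  have hdw : d v - d w' = 2 * d v := by
    rw [hw']
    split
    · next h => rw [h, hd0]; ring
    · next h =>
        have := hd v (by omega) (by omega)
        rw [this]; ring
  have hdvd1 : ∀ w, w ∈ Finset.range r → ((r : ℤ) ∣ ((w : ℤ) - v) ↔ w = v) := by
    intro w hw
    rw [Finset.mem_range] at hw
    constructor
    · intro hdvd
      have h1 : |((w : ℤ) - v)| < r := by rw [abs_lt]; omega
      have := dvd_small r hr _ h1 hdvd
      omega
    · intro h; rw [h]; simp
  have hdvd2 : ∀ w, w ∈ Finset.range r → ((r : ℤ) ∣ ((w : ℤ) + v) ↔ w = w') := by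
    intro w hw
    rw [Finset.mem_range] at hw
    constructor
    · intro hdvd
      rcases Nat.eq_zero_or_pos (w + v) with h0 | hpos
      · rw [hw']
        have hv0 : v = 0 := by omega
        simp [hv0]
        omega
      · have hvd' : (r : ℤ) ∣ ((w : ℤ) + v - r) := by
          exact dvd_sub hdvd dvd_rfl
        have h1 : |((w : ℤ) + v - r)| < r := by rw [abs_lt]; omega
        have := dvd_small r hr _ h1 hvd'
        have hwv : w + v = r := by omega
        rw [hw']
        split
        · omega
        · omega
    · intro h
      rw [h, hw']
      split
      · next h0 => rw [h0]; simp
      · next h0 =>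
          have : ((r - v : ℕ) : ℤ) + v = r := by omega
          rw [this]
  -- the two key sums
  have hA : ∑ j ∈ Finset.range r, ν j * Real.cos (2 * Real.pi * j * v / r) = c v := by
    have step1 : ∀ j ∈ Finset.range r, ν j * Real.cos (2 * Real.pi * j * v / r)
        = (∑ w ∈ Finset.range r,
            (c w * (Real.cos (2 * Real.pi * j * w / r) * Real.cos (2 * Real.pi * j * v / r))
              + d w * (Real.sin (2 * Real.pi * j * w / r) * Real.cos (2 * Real.pi * j * v / r)))) / r := by
      intro j _
      rw [hν, div_mul_eq_mul_div, Finset.sum_mul]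
      congr 1
      exact Finset.sum_congr rfl fun w _ => by ring
    rw [Finset.sum_congr rfl step1, ← Finset.sum_div, Finset.sum_comm]
    have step2 : ∀ w ∈ Finset.range r, ∑ j ∈ Finset.range r,
        (c w * (Real.cos (2 * Real.pi * j * w / r) * Real.cos (2 * Real.pi * j * v / r))
          + d w * (Real.sin (2 * Real.pi * j * w / r) * Real.cos (2 * Real.pi * j * v / r)))
        = ((if w = v then c w * r else 0) + (if w = w' then c w * r else 0)) / 2 := by
      intro w hw
      rw [Finset.sum_add_distrib, ← Finset.mul_sum, ← Finset.mul_sum, sum_cc r hr, sum_sc r hr,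
        mul_zero, add_zero]
      simp only [hdvd1 w hw, hdvd2 w hw, mul_ite, mul_zero]
      split_ifs <;> ring
    rw [Finset.sum_congr rfl step2, ← Finset.sum_div, Finset.sum_add_distrib,
      Finset.sum_ite_eq' (Finset.range r) v (fun w => c w * r),
      Finset.sum_ite_eq' (Finset.range r) w' (fun w => c w * r),
      if_pos hvmem, if_pos hw'mem, hcw]
    field_simp
    ring
  have hB : ∑ j ∈ Finset.range r, ν j * Real.sin (2 * Real.pi * j * v / r) = d v := by
    have step1 : ∀ j ∈ Finset.range r, ν j * Real.sin (2 * Real.pi * j * v / r)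
        = (∑ w ∈ Finset.range r,
            (c w * (Real.cos (2 * Real.pi * j * w / r) * Real.sin (2 * Real.pi * j * v / r))
              + d w * (Real.sin (2 * Real.pi * j * w / r) * Real.sin (2 * Real.pi * j * v / r)))) / r := by
      intro j _
      rw [hν, div_mul_eq_mul_div, Finset.sum_mul]
      congr 1
      exact Finset.sum_congr rfl fun w _ => by ring
    rw [Finset.sum_congr rfl step1, ← Finset.sum_div, Finset.sum_comm]
    have step2 : ∀ w ∈ Finset.range r, ∑ j ∈ Finset.range r,
        (c w * (Real.cos (2 * Real.pi * j * w / r) * Real.sin (2 * Real.pi * j * v / r))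
          + d w * (Real.sin (2 * Real.pi * j * w / r) * Real.sin (2 * Real.pi * j * v / r)))
        = ((if w = v then d w * r else 0) - (if w = w' then d w * r else 0)) / 2 := by
      intro w hw
      have hcs : ∀ j ∈ Finset.range r,
          c w * (Real.cos (2 * Real.pi * j * w / r) * Real.sin (2 * Real.pi * j * v / r))
            + d w * (Real.sin (2 * Real.pi * j * w / r) * Real.sin (2 * Real.pi * j * v / r))
          = c w * (Real.sin (2 * Real.pi * j * v / r) * Real.cos (2 * Real.pi * j * w / r))
            + d w * (Real.sin (2 * Real.pi * j * w / r) * Real.sin (2 * Real.pi * j * v / r)) := by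
        intro j _; ring
      rw [Finset.sum_congr rfl hcs, Finset.sum_add_distrib, ← Finset.mul_sum, ← Finset.mul_sum,
        sum_sc r hr, sum_ss r hr, mul_zero, zero_add]
      simp only [hdvd1 w hw, hdvd2 w hw, mul_ite, mul_zero]
      split_ifs <;> ring
    rw [Finset.sum_congr rfl step2, ← Finset.sum_div, Finset.sum_sub_distrib,
      Finset.sum_ite_eq' (Finset.range r) v (fun w => d w * r),
      Finset.sum_ite_eq' (Finset.range r) w' (fun w => d w * r),
      if_pos hvmem, if_pos hw'mem]
    have : (d v * r - d w' * r) / 2 / r = (d v - d w') / 2 := by field_simp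
    rw [this, hdw]
    ring
  -- assemble
  have expand : ∀ j ∈ Finset.range r,
      ν j * Real.sin (u + 2 * Real.pi * j * v / r)
        = Real.sin u * (ν j * Real.cos (2 * Real.pi * j * v / r))
          + Real.cos u * (ν j * Real.sin (2 * Real.pi * j * v / r)) := by
    intro j _
    rw [Real.sin_add]
    ring
  rw [Finset.sum_congr rfl expand, Finset.sum_add_distrib, ← Finset.mul_sum, ← Finset.mul_sum,
    hA, hB]
  ring
end
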